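/- Let S = {b_1,...,b_m} be positive integers with sum 2T, m >= 20, such that no subset of indices sums to exactly T. In the 3-agent instance where agent 1 values g_1,...,g_m at T each, d_1 at 4T, d_2 at T, and agents 2 and 3 value g_i at b_i, d_1 at 5T, d_2 at (m-2)T, every EQ1 allocation A satisfies v_1(A_1) < (v_2(A_2) + v_3(A_3))/2. -/

import Mathlib

open Finset

/-- An allocation is a partition of the goods among the agents. -/
def isPartition {ι γ : Type*} [Fintype ι] [Fintype γ] [DecidableEq γ]
    (A : ι → Finset γ) : Prop :=
  (∀ i j, i ≠ j → Disjoint (A i) (A j)) ∧ Finset.univ.biUnion A = Finset.univ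

/-- Additive value of a bundle. -/
def bundleVal {γ : Type*} (v : γ → ℚ) (S : Finset γ) : ℚ := ∑ g ∈ S, v g

/-- EQ1: for every pair of agents `i, j` with `A i` nonempty, some good can be
removed from `A i` so that `i`'s value drops to at most `j`'s value. -/
def EQ1 {ι γ : Type*} [DecidableEq γ] (v : ι → γ → ℚ) (A : ι → Finset γ) : Prop :=
  ∀ i j, A i ≠ ∅ → ∃ g ∈ A i, bundleVal (v i) ((A i).erase g) ≤ bundleVal (v j) (A j)

/-- Valuations of the weak-NP-hardness reduction (Fig. 2): goods are
`g_1, …, g_m` (`Sum.inl`) plus `d_1 = Sum.inr 0` and `d_2 = Sum.inr 1`. -/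
def vRed (m : ℕ) (T : ℤ) (b : Fin m → ℤ) : Fin 3 → (Fin m ⊕ Fin 2) → ℚ :=
  fun i g =>
    match g with
    | Sum.inl j => if i = 0 then (T : ℚ) else (b j : ℚ)
    | Sum.inr 0 => if i = 0 then 4 * (T : ℚ) else 5 * (T : ℚ)
    | Sum.inr 1 => if i = 0 then (T : ℚ) else ((m : ℚ) - 2) * (T : ℚ)

lemma sum_decomp {m : ℕ} (S : Finset (Fin m ⊕ Fin 2)) (f : Fin m ⊕ Fin 2 → ℚ) :
    ∑ g ∈ S, f g = (∑ j ∈ S.toLeft, f (Sum.inl j))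
      + ((if Sum.inr 0 ∈ S then f (Sum.inr 0) else 0)
        + (if Sum.inr 1 ∈ S then f (Sum.inr 1) else 0)) := by
  classical
  conv_lhs => rw [← Finset.toLeft_disjSum_toRight (u := S)]
  rw [Finset.sum_disjSum]
  congr 1
  have h : ∑ j ∈ S.toRight, f (Sum.inr j)
      = ∑ j : Fin 2, if j ∈ S.toRight then f (Sum.inr j) else 0 := by
    rw [Finset.sum_ite_mem, Finset.univ_inter]
  rw [h, Fin.sum_univ_two]
  simp [Finset.mem_toRight]

/-- if no subset of indices has `b`-sum exactly `T` (a `no`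
instance of 2-partition), then every EQ1 allocation `A` of the reduced
instance satisfies `v₁(A₁) < (v₂(A₂) + v₃(A₃))/2`. -/
theorem stmt5 (m : ℕ) (hm : 20 ≤ m) (T : ℤ) (b : Fin m → ℤ)
    (hb : ∀ i, 0 < b i) (hsum : ∑ i, b i = 2 * T)
    (hno : ∀ s : Finset (Fin m), ∑ i ∈ s, b i ≠ T)
    (A : Fin 3 → Finset (Fin m ⊕ Fin 2))
    (hpart : isPartition A) (heq1 : EQ1 (vRed m T b) A) :
    bundleVal (vRed m T b 0) (A 0)
      < (bundleVal (vRed m T b 1) (A 1) + bundleVal (vRed m T b 2) (A 2)) / 2 := by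
  classical
  obtain ⟨hdisj, hcov⟩ := hpart
  -- positivity of T
  have hTZ : 0 < T := by
    have h1 : (m : ℤ) ≤ ∑ i, b i := by
      calc (m : ℤ) = ∑ _i : Fin m, (1 : ℤ) := by simp
        _ ≤ ∑ i, b i := Finset.sum_le_sum fun i _ => hb i
    omega
  have ht : (0 : ℚ) < (T : ℚ) := by exact_mod_cast hTZ
  have hmq : (20 : ℚ) ≤ (m : ℚ) := by exact_mod_cast hm
  have hmT : 20 * (T : ℚ) ≤ (m : ℚ) * T := by nlinarith
  -- agents 1 and 2 have the same valuation
  have hw2 : vRed m T b 2 = vRed m T b 1 := by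
    funext g
    rcases g with j | j
    · simp [vRed]
    · fin_cases j <;> simp [vRed]
  -- good values
  have hwinl : ∀ j, vRed m T b 1 (Sum.inl j) = (b j : ℚ) := fun j => by simp [vRed]
  have hwd1 : vRed m T b 1 (Sum.inr 0) = 5 * T := by simp [vRed]
  have hwd2 : vRed m T b 1 (Sum.inr 1) = ((m : ℚ) - 2) * T := by simp [vRed]
  have h0inl : ∀ j, vRed m T b 0 (Sum.inl j) = (T : ℚ) := fun j => by simp [vRed]
  have h0d1 : vRed m T b 0 (Sum.inr 0) = 4 * T := by simp [vRed]
  have h0d2 : vRed m T b 0 (Sum.inr 1) = (T : ℚ) := by simp [vRed]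
  -- quantities
  set κ : ℚ := ((A 0).toLeft.card : ℚ) * T with hκdef
  have hκ : 0 ≤ κ := mul_nonneg (by positivity) ht.le
  set β : ℚ := ∑ j ∈ (A 0).toLeft, (b j : ℚ) with hβdef
  have hβ0 : 0 ≤ β := Finset.sum_nonneg fun j _ => by
    have := (hb j).le; exact_mod_cast this
  have hβ2 : β ≤ 2 * T := by
    have h1 : β ≤ ∑ j : Fin m, (b j : ℚ) :=
      Finset.sum_le_sum_of_subset_of_nonneg (Finset.subset_univ _)
        (fun j _ _ => by have := (hb j).le; exact_mod_cast this)
    have h2 : (∑ j : Fin m, (b j : ℚ)) = 2 * T := by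
      have h3 := congrArg (fun z : ℤ => (z : ℚ)) hsum
      push_cast at h3
      exact h3
    linarith
  -- decomposition of agent-0 value of bundle A 0
  have hdec0 : bundleVal (vRed m T b 0) (A 0)
      = κ + ((if Sum.inr 0 ∈ A 0 then 4 * (T : ℚ) else 0)
        + (if Sum.inr 1 ∈ A 0 then (T : ℚ) else 0)) := by
    have hsum0 : ∑ j ∈ (A 0).toLeft, vRed m T b 0 (Sum.inl j) = κ := by
      calc ∑ j ∈ (A 0).toLeft, vRed m T b 0 (Sum.inl j)
          = ∑ _j ∈ (A 0).toLeft, (T : ℚ) := Finset.sum_congr rfl fun j _ => h0inl j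
        _ = κ := by rw [Finset.sum_const, nsmul_eq_mul, hκdef]
    rw [bundleVal, sum_decomp, h0d1, h0d2, hsum0]
  -- decomposition of common value of any bundle
  have hdecS : ∀ i : Fin 3, bundleVal (vRed m T b 1) (A i)
      = (∑ j ∈ (A i).toLeft, (b j : ℚ))
        + ((if Sum.inr 0 ∈ A i then 5 * (T : ℚ) else 0)
          + (if Sum.inr 1 ∈ A i then ((m : ℚ) - 2) * T else 0)) := by
    intro i
    rw [bundleVal, sum_decomp, hwd1, hwd2]
    simp only [hwinl]
  -- totals
  have htot : bundleVal (vRed m T b 1) (A 0) + bundleVal (vRed m T b 1) (A 1)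
      + bundleVal (vRed m T b 1) (A 2) = ((m : ℚ) + 5) * T := by
    have hpd : ((Finset.univ : Finset (Fin 3)) : Set (Fin 3)).PairwiseDisjoint A :=
      fun i _ j _ hij => hdisj i j hij
    have h1 : ∑ i : Fin 3, ∑ g ∈ A i, vRed m T b 1 g
        = ∑ g ∈ Finset.univ.biUnion A, vRed m T b 1 g :=
      (Finset.sum_biUnion hpd).symm
    rw [hcov] at h1
    have h2 : ∑ g : Fin m ⊕ Fin 2, vRed m T b 1 g = ((m : ℚ) + 5) * T := by
      rw [Fintype.sum_sum_type]
      have h3 : ∑ j : Fin m, vRed m T b 1 (Sum.inl j) = 2 * (T : ℚ) := by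
        have : ∑ j : Fin m, vRed m T b 1 (Sum.inl j) = ∑ j : Fin m, (b j : ℚ) :=
          Finset.sum_congr rfl fun j _ => hwinl j
        rw [this]
        have h4 := congrArg (fun z : ℤ => (z : ℚ)) hsum
        push_cast at h4
        exact h4
      rw [h3, Fin.sum_univ_two, hwd1, hwd2]
      ring
    calc bundleVal (vRed m T b 1) (A 0) + bundleVal (vRed m T b 1) (A 1)
          + bundleVal (vRed m T b 1) (A 2)
        = ∑ i : Fin 3, ∑ g ∈ A i, vRed m T b 1 g := by
          rw [Fin.sum_univ_three]; rfl
      _ = ((m : ℚ) + 5) * T := by rw [h1, h2]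
  -- nonnegativity of common valuation
  have hwnn : ∀ g, 0 ≤ vRed m T b 1 g := by
    intro g
    match g with
    | Sum.inl j => rw [hwinl]; exact_mod_cast (hb j).le
    | Sum.inr 0 => rw [hwd1]; linarith
    | Sum.inr 1 => rw [hwd2]; nlinarith
  have hsingle : ∀ i g, g ∈ A i → vRed m T b 1 g ≤ bundleVal (vRed m T b 1) (A i) :=
    fun i g hg => Finset.single_le_sum (fun g _ => hwnn g) hg
  have hpair : ∀ i, Sum.inr 0 ∈ A i → Sum.inr 1 ∈ A i →
      5 * (T : ℚ) + ((m : ℚ) - 2) * T ≤ bundleVal (vRed m T b 1) (A i) := by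
    intro i h0 h1
    have hsub : ({Sum.inr 0, Sum.inr 1} : Finset (Fin m ⊕ Fin 2)) ⊆ A i := by
      intro g hg
      simp only [Finset.mem_insert, Finset.mem_singleton] at hg
      rcases hg with rfl | rfl <;> assumption
    have := Finset.sum_le_sum_of_subset_of_nonneg hsub
      (fun g _ _ => hwnn g) (f := vRed m T b 1)
    rwa [Finset.sum_pair (by simp), hwd1, hwd2] at this
  -- EQ1 consequences for agent 0
  have hE : ∀ j : Fin 3, A 0 ≠ ∅ → ∃ g ∈ A 0,
      bundleVal (vRed m T b 0) (A 0) - vRed m T b 0 g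
        ≤ bundleVal (vRed m T b j) (A j) := by
    intro j hne
    obtain ⟨g, hg, hle⟩ := heq1 0 j hne
    exact ⟨g, hg, by rwa [bundleVal, Finset.sum_erase_eq_sub hg] at hle⟩
  have hmax : ∀ g, vRed m T b 0 g ≤ 4 * T := by
    intro g
    match g with
    | Sum.inl j => rw [h0inl]; linarith
    | Sum.inr 0 => rw [h0d1]
    | Sum.inr 1 => rw [h0d2]; linarith
  have hmax' : ∀ g, g ≠ Sum.inr 0 → vRed m T b 0 g ≤ (T : ℚ) := by
    intro g hne
    match g, hne with
    | Sum.inl j, _ => rw [h0inl]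
    | Sum.inr 0, hne => exact absurd rfl hne
    | Sum.inr 1, _ => rw [h0d2]
  have hE4 : ∀ j : Fin 3, A 0 ≠ ∅ →
      bundleVal (vRed m T b 0) (A 0) - 4 * T ≤ bundleVal (vRed m T b j) (A j) := by
    intro j hne
    obtain ⟨g, _, hle⟩ := hE j hne
    have := hmax g
    linarith
  have hE1 : ∀ j : Fin 3, A 0 ≠ ∅ → Sum.inr 0 ∉ A 0 →
      bundleVal (vRed m T b 0) (A 0) - T ≤ bundleVal (vRed m T b j) (A j) := by
    intro j hne hd1
    obtain ⟨g, hg, hle⟩ := hE j hne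
    have hgne : g ≠ Sum.inr 0 := fun h => hd1 (h ▸ hg)
    have := hmax' g hgne
    linarith
  -- ownership of the two special goods
  have hmem : ∀ g : Fin m ⊕ Fin 2, ∃ i, g ∈ A i := by
    intro g
    have : g ∈ Finset.univ.biUnion A := by rw [hcov]; exact Finset.mem_univ _
    simpa [Finset.mem_biUnion] using this
  obtain ⟨i1, hi1⟩ := hmem (Sum.inr 0)
  obtain ⟨i2, hi2⟩ := hmem (Sum.inr 1)
  have hnd : ∀ (g : Fin m ⊕ Fin 2) (i j : Fin 3), g ∈ A i → i ≠ j → g ∉ A j :=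
    fun g i j hgi hij => Finset.disjoint_left.mp (hdisj i j hij) hgi
  -- abbreviations
  set q : ℚ := bundleVal (vRed m T b 1) (A 1) with hqdef
  have hrval : bundleVal (vRed m T b 2) (A 2) = bundleVal (vRed m T b 1) (A 2) := by
    rw [hw2]
  set r : ℚ := bundleVal (vRed m T b 1) (A 2) with hrdef
  rw [hrval]
  by_contra hG
  push_neg at hG
  -- handle the case A 0 = ∅ once and for all
  by_cases hA0 : A 0 = ∅
  · have h1 : bundleVal (vRed m T b 0) (A 0) = 0 := by simp [bundleVal, hA0]
    have h2 : bundleVal (vRed m T b 1) (A 0) = 0 := by simp [bundleVal, hA0]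
    rw [h2] at htot
    rw [h1] at hG
    linarith
  have hne : A 0 ≠ ∅ := hA0
  have hcase : ∀ i : Fin 3, i = 0 ∨ i = 1 ∨ i = 2 := by decide
  rcases hcase i1 with rfl | rfl | rfl <;> rcases hcase i2 with rfl | rfl | rfl
  -- case (0,0) : both d₁, d₂ with agent 0
  · have hq1 := hE4 1 hne
    have hr1 := hE4 2 hne
    rw [hw2, ← hrdef] at hr1
    rw [← hqdef] at hq1
    rw [hdec0, if_pos hi1, if_pos hi2] at hq1 hr1 hG
    have hwA0 : bundleVal (vRed m T b 1) (A 0) = β + (5 * T + ((m : ℚ) - 2) * T) := by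
      rw [hdecS 0, if_pos hi1, if_pos hi2, ← hβdef]
    rw [hwA0] at htot
    -- A 1 contains no special goods
    have hq2 : q = ∑ j ∈ (A 1).toLeft, (b j : ℚ) := by
      rw [hqdef, hdecS 1,
        if_neg (hnd _ 0 1 hi1 (by decide)), if_neg (hnd _ 0 1 hi2 (by decide))]
      ring
    have hr0 : 0 ≤ r := by
      rw [hrdef, bundleVal]; exact Finset.sum_nonneg fun g _ => hwnn g
    have hqT : q = T := by linarith
    have : ((∑ j ∈ (A 1).toLeft, b j : ℤ) : ℚ) = (T : ℚ) := by
      push_cast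
      rw [← hq2, hqT]
    exact hno (A 1).toLeft (by exact_mod_cast this)
  -- case (0,1) : d₁ with agent 0, d₂ with agent 1
  · have hr1 := hE4 2 hne
    rw [hw2, ← hrdef] at hr1
    rw [hdec0, if_pos hi1, if_neg (hnd _ 1 0 hi2 (by decide))] at hr1 hG
    have hwA0 : bundleVal (vRed m T b 1) (A 0) = β + 5 * T := by
      rw [hdecS 0, if_pos hi1, if_neg (hnd _ 1 0 hi2 (by decide)), ← hβdef]; ring
    rw [hwA0] at htot
    have hqlb : ((m : ℚ) - 2) * T ≤ q := by
      have := hsingle 1 _ hi2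
      rw [hwd2] at this
      rw [hqdef]; linarith
    linarith
  -- case (0,2) : d₁ with agent 0, d₂ with agent 2
  · have hq1 := hE4 1 hne
    rw [← hqdef] at hq1
    rw [hdec0, if_pos hi1, if_neg (hnd _ 2 0 hi2 (by decide))] at hq1 hG
    have hwA0 : bundleVal (vRed m T b 1) (A 0) = β + 5 * T := by
      rw [hdecS 0, if_pos hi1, if_neg (hnd _ 2 0 hi2 (by decide)), ← hβdef]; ring
    rw [hwA0] at htot
    have hrlb : ((m : ℚ) - 2) * T ≤ r := by
      have := hsingle 2 _ hi2
      rw [hwd2] at this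
      rw [hrdef]; linarith
    linarith
  -- case (1,0) : d₁ with agent 1, d₂ with agent 0
  · have hn1 : Sum.inr 0 ∉ A 0 := hnd _ 1 0 hi1 (by decide)
    have hr1 := hE1 2 hne hn1
    rw [hw2, ← hrdef] at hr1
    rw [hdec0, if_neg hn1, if_pos hi2] at hr1 hG
    have hwA0 : bundleVal (vRed m T b 1) (A 0) = β + ((m : ℚ) - 2) * T := by
      rw [hdecS 0, if_neg hn1, if_pos hi2, ← hβdef]; ring
    rw [hwA0] at htot
    have hqlb : 5 * (T : ℚ) ≤ q := by
      have := hsingle 1 _ hi1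
      rw [hwd1] at this
      rw [hqdef]; linarith
    linarith
  -- case (1,1) : both with agent 1
  · have hn1 : Sum.inr 0 ∉ A 0 := hnd _ 1 0 hi1 (by decide)
    have hn2 : Sum.inr 1 ∉ A 0 := hnd _ 1 0 hi2 (by decide)
    have hr1 := hE1 2 hne hn1
    rw [hw2, ← hrdef] at hr1
    rw [hdec0, if_neg hn1, if_neg hn2] at hr1 hG
    have hwA0 : bundleVal (vRed m T b 1) (A 0) = β := by
      rw [hdecS 0, if_neg hn1, if_neg hn2, ← hβdef]; ring
    rw [hwA0] at htot
    have hqlb := hpair 1 hi1 hi2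
    rw [← hqdef] at hqlb
    linarith
  -- case (1,2) : d₁ with agent 1, d₂ with agent 2
  · have hn1 : Sum.inr 0 ∉ A 0 := hnd _ 1 0 hi1 (by decide)
    have hn2 : Sum.inr 1 ∉ A 0 := hnd _ 2 0 hi2 (by decide)
    have hq1 := hE1 1 hne hn1
    rw [← hqdef] at hq1
    rw [hdec0, if_neg hn1, if_neg hn2] at hq1 hG
    have hwA0 : bundleVal (vRed m T b 1) (A 0) = β := by
      rw [hdecS 0, if_neg hn1, if_neg hn2, ← hβdef]; ring
    rw [hwA0] at htot
    have hrlb : ((m : ℚ) - 2) * T ≤ r := by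
      have := hsingle 2 _ hi2
      rw [hwd2] at this
      rw [hrdef]; linarith
    linarith
  -- case (2,0) : d₁ with agent 2, d₂ with agent 0
  · have hn1 : Sum.inr 0 ∉ A 0 := hnd _ 2 0 hi1 (by decide)
    have hq1 := hE1 1 hne hn1
    rw [← hqdef] at hq1
    rw [hdec0, if_neg hn1, if_pos hi2] at hq1 hG
    have hwA0 : bundleVal (vRed m T b 1) (A 0) = β + ((m : ℚ) - 2) * T := by
      rw [hdecS 0, if_neg hn1, if_pos hi2, ← hβdef]; ring
    rw [hwA0] at htot
    have hrlb : 5 * (T : ℚ) ≤ r := by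
      have := hsingle 2 _ hi1
      rw [hwd1] at this
      rw [hrdef]; linarith
    linarith
  -- case (2,1) : d₁ with agent 2, d₂ with agent 1
  · have hn1 : Sum.inr 0 ∉ A 0 := hnd _ 2 0 hi1 (by decide)
    have hn2 : Sum.inr 1 ∉ A 0 := hnd _ 1 0 hi2 (by decide)
    have hr1 := hE1 2 hne hn1
    rw [hw2, ← hrdef] at hr1
    rw [hdec0, if_neg hn1, if_neg hn2] at hr1 hG
    have hwA0 : bundleVal (vRed m T b 1) (A 0) = β := by
      rw [hdecS 0, if_neg hn1, if_neg hn2, ← hβdef]; ring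
    rw [hwA0] at htot
    have hqlb : ((m : ℚ) - 2) * T ≤ q := by
      have := hsingle 1 _ hi2
      rw [hwd2] at this
      rw [hqdef]; linarith
    linarith
  -- case (2,2) : both with agent 2
  · have hn1 : Sum.inr 0 ∉ A 0 := hnd _ 2 0 hi1 (by decide)
    have hn2 : Sum.inr 1 ∉ A 0 := hnd _ 2 0 hi2 (by decide)
    have hq1 := hE1 1 hne hn1
    rw [← hqdef] at hq1
    rw [hdec0, if_neg hn1, if_neg hn2] at hq1 hG
    have hwA0 : bundleVal (vRed m T b 1) (A 0) = β := by
      rw [hdecS 0, if_neg hn1, if_neg hn2, ← hβdef]; ring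
    rw [hwA0] at htot
    have hrlb := hpair 2 hi1 hi2
    rw [← hrdef] at hrlb
    linarith
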